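/- Let a, b be integers with 1 ≤ a < b, set n = a + b, and let ρ = (n−1, n−2, …, 1, 0) ∈ ℝⁿ. For integers α_1 ≥ … ≥ α_{2a} ≥ 0, let η(α) ∈ ℝⁿ have i-th coordinate α_i for 1 ≤ i ≤ 2a and remaining coordinates 0, and define δ(α) ∈ ℝⁿ as the weakly decreasing vector whose multiset of coordinates is {n−2a−1, n−2a−2, …, 1, 0} together with 0 repeated 2a times if Σ_{i} α_i ≡ a (mod 2), and {n−2a−1, …, 1, 0} together with one 1 and 0 repeated 2a−1 times if Σ_{i} α_i ≢ a (mod 2). Then there exist natural numbers c_1, …, c_n such that {η(α) − ρ} − δ(α) = Σ_{i=1}^{n−1} c_i (e_i − e_{i+1}) + c_n (e_{n−1} + e_n). (Here {v} denotes the weakly decreasing rearrangement of the vector of absolute values (|v_1|, …, |v_n|), and e_1, …, e_n is the standard basis of ℝⁿ.) -/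

import Mathlib

/-- The simple roots of type `D_n`: for `i + 1 < n` the root `e_i - e_{i+1}`, and for the
last index the root `e_{n-2} + e_{n-1}` (0-based; this is `e_{n-1} + e_n` in 1-based
indexing). -/
noncomputable def simpleRootD (n : ℕ) (i : Fin n) : Fin n → ℝ :=
  if (i : ℕ) + 1 < n then
    fun k => (if k = i then 1 else 0) - (if (k : ℕ) = (i : ℕ) + 1 then 1 else 0)
  else
    fun k => (if (k : ℕ) + 2 = n then 1 else 0) + (if (k : ℕ) + 1 = n then 1 else 0)

lemma sum_desc_eq (M : ℕ) :
    ∑ j ∈ Finset.range M, ((M:ℤ) - 1 - j) = ∑ j ∈ Finset.range M, (j:ℤ) := by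
  rw [← Finset.sum_range_reflect (fun j => (j:ℤ)) M]
  apply Finset.sum_congr rfl
  intro j hj
  have := Finset.mem_range.mp hj
  omega

lemma gauss2 (M : ℕ) : 2 * (∑ j ∈ Finset.range M, (j:ℤ)) = M * (M - 1) := by
  have h := congrArg (Nat.cast : ℕ → ℤ) (Finset.sum_range_id_mul_two M)
  push_cast at h
  rcases M with _|M'
  · simp
  · push_cast at h ⊢
    linarith

lemma pigeon {n : ℕ} (W : Fin n → ℤ) (hanti : ∀ i j : Fin n, i ≤ j → W j ≤ W i)
    (t : ℤ) (m : ℕ) (f : ℕ → Fin n)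
    (hmap : ∀ x, x < m → t ≤ W (f x))
    (hinj : ∀ x, x < m → ∀ y, y < m → f x = f y → x = y)
    (k : ℕ) (hk : k < n) (hkm : k < m) : t ≤ W ⟨k, hk⟩ := by
  by_contra hcon
  push_neg at hcon
  have hmle : m ≤ (Finset.univ.filter fun i : Fin n => t ≤ W i).card := by
    calc m = (Finset.range m).card := (Finset.card_range m).symm
    _ ≤ _ := by
      apply Finset.card_le_card_of_injOn f
      · intro x hx
        simp only [Finset.mem_coe, Finset.mem_filter, Finset.mem_univ, true_and]
        exact hmap x (Finset.mem_range.mp hx)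
      · intro x hx y hy hxy
        exact hinj x (Finset.mem_range.mp hx) y (Finset.mem_range.mp hy) hxy
  have hsub : (Finset.univ.filter fun i : Fin n => t ≤ W i) ⊆
      Finset.univ.filter (fun i : Fin n => (i:ℕ) < k) := by
    intro i hi
    simp only [Finset.mem_filter, Finset.mem_univ, true_and] at hi ⊢
    by_contra hik
    push_neg at hik
    have h1 : W i ≤ W ⟨k, hk⟩ := hanti ⟨k, hk⟩ i (by simpa [Fin.le_def] using hik)
    omega
  have hcard : (Finset.univ.filter (fun i : Fin n => (i:ℕ) < k)).card ≤ k := by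
    calc _ ≤ (Finset.range k).card := by
          refine Finset.card_le_card_of_injOn (fun i => (i:ℕ)) ?_ ?_
          · intro x hx
            simp only [Finset.mem_coe, Finset.mem_filter, Finset.mem_univ, true_and] at hx
            exact Finset.mem_range.mpr hx
          · intro x _ y _ h
            exact Fin.val_injective h
    _ = k := Finset.card_range k
  have := Finset.card_le_card hsub
  omega

lemma sum_smul_simpleRootD {n : ℕ} (hn : 3 ≤ n) (d : Fin n → ℝ) (k : Fin n) :
    (∑ i : Fin n, d i • simpleRootD n i) k
      = (if (k:ℕ) + 1 < n then d k else 0)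
        - (if h : 1 ≤ (k:ℕ) then d ⟨(k:ℕ) - 1, by omega⟩ else 0)
        + ((if (k:ℕ) + 2 = n then (1:ℝ) else 0) + (if (k:ℕ) + 1 = n then (1:ℝ) else 0))
            * d ⟨n - 1, by omega⟩ := by
  classical
  set L : Fin n := ⟨n - 1, by omega⟩ with hLdef
  have hLv : (L : ℕ) = n - 1 := rfl
  rw [Finset.sum_apply]
  rw [← Finset.sum_erase_add Finset.univ (fun i => (d i • simpleRootD n i) k) (Finset.mem_univ L)]
  have hlast : (d L • simpleRootD n L) k
      = ((if (k:ℕ) + 2 = n then (1:ℝ) else 0) + (if (k:ℕ) + 1 = n then (1:ℝ) else 0)) * d L := by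
    rw [Pi.smul_apply, smul_eq_mul]
    simp only [simpleRootD, if_neg (show ¬((L:ℕ) + 1 < n) by rw [hLv]; omega)]
    ring
  have hgen : ∀ i ∈ Finset.univ.erase L, (d i • simpleRootD n i) k
      = (if k = i then d i else 0) - (if (k:ℕ) = (i:ℕ) + 1 then d i else 0) := by
    intro i hi
    have h1 : i ≠ L := (Finset.mem_erase.mp hi).1
    have hiv : (i:ℕ) + 1 < n := by
      have h2 : (i:ℕ) < n := i.isLt
      have h3 : (i:ℕ) ≠ n - 1 := fun hh => h1 (Fin.ext (by rw [hh, hLv]))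
      omega
    rw [Pi.smul_apply, smul_eq_mul]
    simp only [simpleRootD, if_pos hiv]
    simp only [mul_sub, mul_ite, mul_one, mul_zero]
  rw [Finset.sum_congr rfl hgen, Finset.sum_sub_distrib, hlast]
  congr 1
  congr 1
  · rw [Finset.sum_ite_eq]
    by_cases hk : (k:ℕ) + 1 < n
    · rw [if_pos, if_pos hk]
      rw [Finset.mem_erase]
      exact ⟨fun h => by have : (k:ℕ) = n - 1 := by rw [h, hLv]
                         omega, Finset.mem_univ k⟩
    · rw [if_neg, if_neg hk]
      rw [Finset.mem_erase]
      intro h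
      exact h.1 (Fin.ext (by rw [hLv]; have := k.isLt; omega))
  · by_cases hk : 1 ≤ (k:ℕ)
    · rw [dif_pos hk]
      set km : Fin n := ⟨(k:ℕ) - 1, by omega⟩ with hkm
      have hkmv : (km : ℕ) = (k:ℕ) - 1 := rfl
      have hcong : ∀ i ∈ Finset.univ.erase L,
          (if (k:ℕ) = (i:ℕ) + 1 then d i else 0) = (if km = i then d i else 0) := by
        intro i _
        refine if_congr ?_ rfl rfl
        rw [Fin.ext_iff, hkmv]
        omega
      rw [Finset.sum_congr rfl hcong, Finset.sum_ite_eq, if_pos]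
      rw [Finset.mem_erase]
      refine ⟨fun h => ?_, Finset.mem_univ km⟩
      have : (km:ℕ) = n - 1 := by rw [h, hLv]
      rw [hkmv] at this
      have := k.isLt
      omega
    · rw [dif_neg hk]
      apply Finset.sum_eq_zero
      intro i _
      rw [if_neg]
      omega


set_option maxHeartbeats 1000000 in
/-- Type D positivity (claim (7.2) of Proposition 7.1): with `n = a + b` (`a < b`),
`ρ = (n-1, …, 1, 0)`, `η(α) = (α_1, …, α_{2a}, 0, …, 0)`, and `δ(α)` the weakly
decreasing vector with coordinate multiset `{n-2a-1, …, 1, 0} ∪ {0^{2a}}` if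
`Σ α_i ≡ a (mod 2)` and `{n-2a-1, …, 1, 0} ∪ {1} ∪ {0^{2a-1}}` otherwise, the difference
`{η(α) - ρ} - δ(α)` is a nonnegative integer combination of the simple roots
`e_i - e_{i+1}` (`1 ≤ i ≤ n-1`) and `e_{n-1} + e_n`. -/
theorem stmt11 (a b : ℕ) (ha : 1 ≤ a) (hab : a < b) (α : Fin (2 * a) → ℤ)
    (hα : ∀ i j : Fin (2 * a), i ≤ j → α j ≤ α i) (hα0 : ∀ i, 0 ≤ α i)
    (w : Fin (a + b) → ℝ)
    (hw : ∀ i j : Fin (a + b), i ≤ j → w j ≤ w i)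
    (hwperm : ∃ σ : Equiv.Perm (Fin (a + b)), ∀ i,
      w i = |(if h : ((σ i : ℕ)) < 2 * a then ((α ⟨(σ i : ℕ), h⟩ : ℤ) : ℝ) else 0)
              - (((a + b : ℕ) : ℝ) - 1 - ((σ i : ℕ) : ℝ))|) :
    ∃ c : Fin (a + b) → ℕ,
      w - (fun k : Fin (a + b) =>
          if (∑ i : Fin (2 * a), α i) % 2 = (a : ℤ) % 2 then
            max (((a + b : ℕ) : ℝ) - 2 * a - 1 - ((k : ℕ) : ℝ)) 0
          else if (k : ℕ) + a + 1 = b then 1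
          else max (((a + b : ℕ) : ℝ) - 2 * a - 1 - ((k : ℕ) : ℝ)) 0)
        = ∑ i : Fin (a + b), (c i : ℝ) • simpleRootD (a + b) i := by
  classical
  obtain ⟨σ, hσ⟩ := hwperm
  have hn3 : 3 ≤ a + b := by omega
  have h2a : 2 * a + 1 ≤ a + b := by omega
  have hpos : 0 < a + b := by omega
  -- integer versions
  set G : Fin (a + b) → ℤ := fun j =>
    (if h : (j:ℕ) < 2 * a then α ⟨(j:ℕ), h⟩ else 0) - ((a:ℤ) + b - 1 - (j:ℕ)) with hGdef
  have hGeq : ∀ j : Fin (a + b),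
      G j = (if h : (j:ℕ) < 2 * a then α ⟨(j:ℕ), h⟩ else 0) - ((a:ℤ) + b - 1 - (j:ℕ)) :=
    fun _ => rfl
  set W : Fin (a + b) → ℤ := fun i => |G (σ i)| with hWdef
  have hWeq : ∀ i, W i = |G (σ i)| := fun _ => rfl
  have hWsymm : ∀ j : Fin (a + b), W (σ.symm j) = |G j| := by
    intro j
    rw [hWeq, Equiv.apply_symm_apply]
  have hGcast : ∀ j : Fin (a + b),
      ((G j : ℤ) : ℝ) = (if h : (j:ℕ) < 2 * a then ((α ⟨(j:ℕ), h⟩ : ℤ) : ℝ) else 0)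
        - (((a + b : ℕ) : ℝ) - 1 - ((j:ℕ) : ℝ)) := by
    intro j
    rw [hGeq]
    by_cases h : (j:ℕ) < 2 * a
    · rw [dif_pos h, dif_pos h]; push_cast; ring
    · rw [dif_neg h, dif_neg h]; push_cast; ring
  have hwW : ∀ i, w i = (W i : ℝ) := by
    intro i
    rw [hσ i, hWeq, Int.cast_abs, hGcast (σ i)]
  have hWanti : ∀ i j : Fin (a + b), i ≤ j → W j ≤ W i := by
    intro i j hij
    have := hw i j hij
    rw [hwW i, hwW j] at this
    exact_mod_cast this
  have hWnonneg : ∀ i, 0 ≤ W i := fun i => abs_nonneg _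
  have habs_tail : ∀ j : Fin (a + b), 2 * a ≤ (j:ℕ) → |G j| = (a:ℤ) + b - 1 - (j:ℕ) := by
    intro j hj
    rw [hGeq, dif_neg (show ¬((j:ℕ) < 2 * a) by omega), zero_sub, abs_neg, abs_of_nonneg]
    have := j.isLt
    omega
  -- sorted lower bound, generic part
  have hWlb : ∀ k : Fin (a + b), max ((a:ℤ) + b - 2 * a - 1 - (k:ℕ)) 0 ≤ W k := by
    intro k
    rcases le_or_gt ((a:ℤ) + b - 2 * a - 1 - (k:ℕ)) 0 with h | h
    · rw [max_eq_right h]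
      exact hWnonneg k
    · rw [max_eq_left h.le]
      have hk2 : (k:ℕ) + 2 * a + 2 ≤ a + b := by omega
      set f : ℕ → Fin (a + b) :=
        fun x => σ.symm ⟨(2 * a + x) % (a + b), Nat.mod_lt _ hpos⟩ with hfdef
      have hfeq : ∀ x, f x = σ.symm ⟨(2 * a + x) % (a + b), Nat.mod_lt _ hpos⟩ :=
        fun _ => rfl
      have hple := pigeon W hWanti ((a:ℤ) + b - 2 * a - 1 - (k:ℕ)) ((k:ℕ) + 1) f
        ?_ ?_ (k:ℕ) k.isLt (by omega)
      · rwa [Fin.eta k k.isLt] at hple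
      · intro x hx
        have hmod : (2 * a + x) % (a + b) = 2 * a + x := Nat.mod_eq_of_lt (by omega)
        rw [hfeq, hWsymm, habs_tail _ (by simp only [Fin.val_mk]; omega)]
        simp only [Fin.val_mk, hmod]
        push_cast
        omega
      · intro x hx y hy hxy
        rw [hfeq, hfeq] at hxy
        have h1 := σ.symm.injective hxy
        have h2 : (2 * a + x) % (a + b) = (2 * a + y) % (a + b) := congrArg Fin.val h1
        rw [Nat.mod_eq_of_lt (by omega), Nat.mod_eq_of_lt (by omega)] at h2
        omega
  -- odd-case extra bound
  have hoddW : ¬((∑ i : Fin (2 * a), α i) % 2 = (a:ℤ) % 2) →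
      ∀ k : Fin (a + b), (k:ℕ) + a + 1 = b → 1 ≤ W k := by
    intro hodd k hk
    have hj0 : ∃ j0 : Fin (a + b), (j0:ℕ) < 2 * a ∧ 1 ≤ |G j0| := by
      by_contra hno
      push_neg at hno
      apply hodd
      have hval : ∀ i : Fin (2 * a), α i = (a:ℤ) + b - 1 - (i:ℕ) := by
        intro i
        have hi2a : (i:ℕ) < 2 * a := i.isLt
        have hi' : (i:ℕ) < a + b := by omega
        have hno' := hno ⟨(i:ℕ), hi'⟩ (by simp only [Fin.val_mk]; exact hi2a)
        rw [hGeq] at hno'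
        simp only [Fin.val_mk] at hno'
        rw [dif_pos hi2a, Fin.eta i hi2a, Int.abs_eq_natAbs] at hno'
        omega
      have hsum1 : ∑ i : Fin (2 * a), α i = ∑ i : Fin (2 * a), ((a:ℤ) + b - 1 - (i:ℕ)) :=
        Finset.sum_congr rfl fun i _ => hval i
      rw [Fin.sum_univ_eq_sum_range (fun j => (a:ℤ) + b - 1 - (j:ℕ)) (2 * a)] at hsum1
      have hsplit : ∑ j ∈ Finset.range (2 * a), ((a:ℤ) + b - 1 - (j:ℕ))
          = (2 * a : ℕ) * ((a:ℤ) + b - 1) - ∑ j ∈ Finset.range (2 * a), (j:ℤ) := by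
        rw [Finset.sum_sub_distrib, Finset.sum_const, Finset.card_range, nsmul_eq_mul]
      have hg := gauss2 (2 * a)
      have h2 : ∑ i : Fin (2 * a), α i - (a:ℤ) = 2 * ((a:ℤ) * (a + b - 1) - a * a) := by
        have hgval : ∑ j ∈ Finset.range (2 * a), (j:ℤ) = (a:ℤ) * (2 * a - 1) := by
          push_cast at hg
          linarith
        rw [hsum1, hsplit, hgval]
        push_cast
        ring
      omega
    obtain ⟨j0, hj0a, hj0b⟩ := hj0
    set f : ℕ → Fin (a + b) := fun x =>
      if x = 0 then σ.symm j0
      else σ.symm ⟨(2 * a + x - 1) % (a + b), Nat.mod_lt _ hpos⟩ with hfdef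
    have hfeq : ∀ x, f x = if x = 0 then σ.symm j0
        else σ.symm ⟨(2 * a + x - 1) % (a + b), Nat.mod_lt _ hpos⟩ := fun _ => rfl
    have hple := pigeon W hWanti 1 (b - a) f ?_ ?_ (k:ℕ) k.isLt (by omega)
    · rwa [Fin.eta k k.isLt] at hple
    · intro x hx
      by_cases hx0 : x = 0
      · rw [hfeq, if_pos hx0, hWsymm]
        exact hj0b
      · rw [hfeq, if_neg hx0, hWsymm]
        have hmod : (2 * a + x - 1) % (a + b) = 2 * a + x - 1 := Nat.mod_eq_of_lt (by omega)
        rw [habs_tail _ (by simp only [Fin.val_mk]; omega)]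
        simp only [Fin.val_mk, hmod]
        push_cast
        omega
    · intro x hx y hy hxy
      rw [hfeq, hfeq] at hxy
      by_cases hx0 : x = 0 <;> by_cases hy0 : y = 0
      · omega
      · exfalso
        rw [if_pos hx0, if_neg hy0] at hxy
        have h1 := σ.symm.injective hxy
        have h2 : (j0:ℕ) = (2 * a + y - 1) % (a + b) := congrArg Fin.val h1
        rw [Nat.mod_eq_of_lt (by omega)] at h2
        omega
      · exfalso
        rw [if_neg hx0, if_pos hy0] at hxy
        have h1 := σ.symm.injective hxy
        have h2 : (2 * a + x - 1) % (a + b) = (j0:ℕ) := congrArg Fin.val h1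
        rw [Nat.mod_eq_of_lt (by omega)] at h2
        omega
      · rw [if_neg hx0, if_neg hy0] at hxy
        have h1 := σ.symm.injective hxy
        have h2 : (2 * a + x - 1) % (a + b) = (2 * a + y - 1) % (a + b) :=
          congrArg Fin.val h1
        rw [Nat.mod_eq_of_lt (by omega), Nat.mod_eq_of_lt (by omega)] at h2
        omega
  -- the integer delta
  set D : Fin (a + b) → ℤ := fun k =>
    if (∑ i : Fin (2 * a), α i) % 2 = (a:ℤ) % 2 then
      max ((a:ℤ) + b - 2 * a - 1 - (k:ℕ)) 0
    else if (k:ℕ) + a + 1 = b then 1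
    else max ((a:ℤ) + b - 2 * a - 1 - (k:ℕ)) 0 with hDdef
  have hDeq : ∀ k : Fin (a + b), D k =
      if (∑ i : Fin (2 * a), α i) % 2 = (a:ℤ) % 2 then
        max ((a:ℤ) + b - 2 * a - 1 - (k:ℕ)) 0
      else if (k:ℕ) + a + 1 = b then 1
      else max ((a:ℤ) + b - 2 * a - 1 - (k:ℕ)) 0 := fun _ => rfl
  have hDW : ∀ k, D k ≤ W k := by
    intro k
    rw [hDeq]
    split_ifs with h1 h2
    · exact hWlb k
    · exact hoddW h1 k h2
    · exact hWlb k
  -- last coordinate vanishes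
  have hWlast : ∀ k : Fin (a + b), (k:ℕ) = a + b - 1 → W k = 0 := by
    intro k hk
    have hlt : a + b - 1 < a + b := by omega
    have hG0 : G ⟨a + b - 1, hlt⟩ = 0 := by
      rw [hGeq]
      simp only [Fin.val_mk]
      rw [dif_neg (show ¬(a + b - 1 < 2 * a) by omega)]
      push_cast
      omega
    have h1 : W k ≤ W (σ.symm ⟨a + b - 1, hlt⟩) := by
      apply hWanti
      rw [Fin.le_def]
      have := (σ.symm (⟨a + b - 1, hlt⟩ : Fin (a + b))).isLt
      omega
    have h2 : W (σ.symm ⟨a + b - 1, hlt⟩) = 0 := by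
      rw [hWsymm, hG0, abs_zero]
    have h3 := hWnonneg k
    omega
  have hDlast : ∀ k : Fin (a + b), (k:ℕ) = a + b - 1 → D k = 0 := by
    intro k hk
    rw [hDeq]
    split_ifs with h1 h2
    · exact max_eq_right (by omega)
    · exfalso; omega
    · exact max_eq_right (by omega)
  -- U and partial sums
  set U : Fin (a + b) → ℤ := fun k => W k - D k with hUdef
  have hUeq : ∀ k, U k = W k - D k := fun _ => rfl
  have hUnn : ∀ k, 0 ≤ U k := fun k => by rw [hUeq]; exact sub_nonneg.mpr (hDW k)
  have hUlast : ∀ k : Fin (a + b), (k:ℕ) = a + b - 1 → U k = 0 := by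
    intro k hk
    rw [hUeq, hWlast k hk, hDlast k hk, sub_zero]
  set Ufun : ℕ → ℤ := fun x => if h : x < a + b then U ⟨x, h⟩ else 0 with hUfdef
  have hUfeq : ∀ x, Ufun x = if h : x < a + b then U ⟨x, h⟩ else 0 := fun _ => rfl
  have hUfnn : ∀ x, 0 ≤ Ufun x := by
    intro x
    rw [hUfeq]
    by_cases h : x < a + b
    · rw [dif_pos h]; exact hUnn _
    · rw [dif_neg h]
  set S : ℕ → ℤ := fun m => ∑ x ∈ Finset.range m, Ufun x with hSdef
  have hSeq : ∀ m, S m = ∑ x ∈ Finset.range m, Ufun x := fun _ => rfl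
  have hS0 : ∀ m, 0 ≤ S m := fun m => Finset.sum_nonneg fun x _ => hUfnn x
  have hSsucc : ∀ m (h : m < a + b), S (m + 1) = S m + U ⟨m, h⟩ := by
    intro m h
    rw [hSeq, hSeq, Finset.sum_range_succ, hUfeq, dif_pos h]
  have hSzero : S 0 = 0 := by rw [hSeq]; simp
  have hSfin : S (a + b) = ∑ k : Fin (a + b), U k := by
    rw [hSeq, ← Fin.sum_univ_eq_sum_range Ufun (a + b)]
    apply Finset.sum_congr rfl
    intro k _
    rw [hUfeq, dif_pos k.isLt, Fin.eta k k.isLt]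
  -- parity of the total
  have hEven : 2 ∣ S (a + b) := by
    rw [hSfin]
    have hsub : ∑ k : Fin (a + b), U k
        = (∑ k : Fin (a + b), W k) - ∑ k : Fin (a + b), D k := by
      rw [show (∑ k : Fin (a + b), U k) = ∑ k : Fin (a + b), (W k - D k) from
        Finset.sum_congr rfl fun k _ => hUeq k, Finset.sum_sub_distrib]
    have hWX : ∑ i : Fin (a + b), W i = ∑ j : Fin (a + b), |G j| := by
      have h1 : ∑ i : Fin (a + b), W i = ∑ i : Fin (a + b), |G (σ i)| :=
        Finset.sum_congr rfl fun i _ => hWeq i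
      rw [h1]
      exact Equiv.sum_comp σ (fun j => |G j|)
    have habsmod : ∀ j : Fin (a + b), |G j| % 2 = G j % 2 := by
      intro j
      rw [Int.abs_eq_natAbs]
      omega
    have hmod1 : (∑ j : Fin (a + b), |G j|) % 2 = (∑ j : Fin (a + b), G j) % 2 := by
      calc (∑ j : Fin (a + b), |G j|) % 2
          = (∑ j : Fin (a + b), (|G j| % 2)) % 2 := Finset.sum_int_mod _ _ _
        _ = (∑ j : Fin (a + b), (G j % 2)) % 2 := by
            rw [Finset.sum_congr rfl fun j _ => habsmod j]
        _ = (∑ j : Fin (a + b), G j) % 2 := (Finset.sum_int_mod _ _ _).symm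
    have hG1 : ∑ j : Fin (a + b), G j
        = (∑ j : Fin (a + b), (if h : (j:ℕ) < 2 * a then α ⟨(j:ℕ), h⟩ else 0))
          - ∑ j : Fin (a + b), ((a:ℤ) + b - 1 - (j:ℕ)) := by
      rw [← Finset.sum_sub_distrib]
      all_goals exact Finset.sum_congr rfl fun j _ => hGeq j
    have hG2 : ∑ j : Fin (a + b), (if h : (j:ℕ) < 2 * a then α ⟨(j:ℕ), h⟩ else 0)
        = ∑ i : Fin (2 * a), α i := by
      rw [Fin.sum_univ_eq_sum_range (fun j => if h : j < 2 * a then α ⟨j, h⟩ else 0) (a + b)]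
      rw [← Finset.sum_subset (Finset.range_subset_range.mpr (by omega : 2 * a ≤ a + b))
        (fun x _ hx => dif_neg (by simpa using hx))]
      rw [← Fin.sum_univ_eq_sum_range (fun j => if h : j < 2 * a then α ⟨j, h⟩ else 0) (2 * a)]
      apply Finset.sum_congr rfl
      intro i _
      rw [dif_pos i.isLt]
      all_goals exact congrArg α (Fin.eta i i.isLt)
    have hG3 : ∑ j : Fin (a + b), ((a:ℤ) + b - 1 - (j:ℕ))
        = ∑ j ∈ Finset.range (a + b), (j:ℤ) := by
      rw [Fin.sum_univ_eq_sum_range (fun j => (a:ℤ) + b - 1 - (j:ℕ)) (a + b)]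
      have hd := sum_desc_eq (a + b)
      push_cast at hd ⊢
      rw [← hd]
    have hDmaxX : ∑ k : Fin (a + b), max ((a:ℤ) + b - 2 * a - 1 - (k:ℕ)) 0
        = ∑ j ∈ Finset.range (b - a), (j:ℤ) := by
      rw [Fin.sum_univ_eq_sum_range (fun k => max ((a:ℤ) + b - 2 * a - 1 - (k:ℕ)) 0) (a + b)]
      rw [← Finset.sum_subset (Finset.range_subset_range.mpr (by omega : b - a ≤ a + b))
        (fun x _ hx => by
          rw [max_eq_right]
          have := Finset.mem_range.not.mp hx
          omega)]
      have hd := sum_desc_eq (b - a)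
      rw [← hd]
      apply Finset.sum_congr rfl
      intro x hx
      have := Finset.mem_range.mp hx
      rw [max_eq_left (by omega)]
      omega
    have hkey : ∃ K : ℤ, (∑ j ∈ Finset.range (a + b), (j:ℤ))
        + (∑ j ∈ Finset.range (b - a), (j:ℤ)) - a = 2 * K := by
      have hg1 := gauss2 (a + b)
      have hg2 := gauss2 (b - a)
      have hmb : ((b - a : ℕ) : ℤ) = (b:ℤ) - a := by omega
      rw [hmb] at hg2
      push_cast at hg1
      have heven : Even (((b:ℤ) - a) * ((b:ℤ) - a - 1)) := by
        have := Int.even_mul_succ_self ((b:ℤ) - a - 1)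
        convert this using 1
        ring
      obtain ⟨t, ht⟩ := heven
      have h2X : 2 * ((∑ j ∈ Finset.range (a + b), (j:ℤ))
          + (∑ j ∈ Finset.range (b - a), (j:ℤ)) - a)
          = ((a:ℤ) + b) * ((a:ℤ) + b - 1) + ((b:ℤ) - a) * ((b:ℤ) - a - 1) - 2 * a := by
        rw [← hg1, ← hg2]; ring
      refine ⟨t + (a:ℤ) * b - a, ?_⟩
      have hX : 2 * ((∑ j ∈ Finset.range (a + b), (j:ℤ))
          + (∑ j ∈ Finset.range (b - a), (j:ℤ)) - a)
          = 2 * (2 * (t + (a:ℤ) * b - a)) := by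
        rw [h2X]
        linear_combination 2 * ht
      linarith
    obtain ⟨K, hK⟩ := hkey
    by_cases hpar : (∑ i : Fin (2 * a), α i) % 2 = (a:ℤ) % 2
    · have hDX : ∑ k : Fin (a + b), D k = ∑ j ∈ Finset.range (b - a), (j:ℤ) := by
        rw [Finset.sum_congr rfl
          (fun k (_ : k ∈ Finset.univ) => by rw [hDeq k, if_pos hpar])]
        exact hDmaxX
      rw [hsub, hWX, hDX]
      omega
    · have hindX : ∑ k : Fin (a + b), (if (k:ℕ) + a + 1 = b then (1:ℤ) else 0) = 1 := by
        have hcong : ∀ k : Fin (a + b), k ∈ Finset.univ → ((if (k:ℕ) + a + 1 = b then (1:ℤ) else 0)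
            = (if (⟨b - a - 1, by omega⟩ : Fin (a + b)) = k then (1:ℤ) else 0)) := by
          intro k _
          refine if_congr ?_ rfl rfl
          rw [Fin.ext_iff]
          simp only [Fin.val_mk]
          omega
        rw [Finset.sum_congr rfl hcong, Finset.sum_ite_eq, if_pos (Finset.mem_univ _)]
      have hDX : ∑ k : Fin (a + b), D k
          = (∑ j ∈ Finset.range (b - a), (j:ℤ)) + 1 := by
        have hpt : ∀ k ∈ Finset.univ, D k
            = max ((a:ℤ) + b - 2 * a - 1 - ((k : Fin (a + b)):ℕ)) 0
              + (if (k:ℕ) + a + 1 = b then (1:ℤ) else 0) := by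
          intro k _
          rw [hDeq k, if_neg hpar]
          by_cases h : (k:ℕ) + a + 1 = b
          · rw [if_pos h, if_pos h, max_eq_right (by omega), zero_add]
          · rw [if_neg h, if_neg h, add_zero]
        rw [Finset.sum_congr rfl hpt, Finset.sum_add_distrib, hDmaxX, hindX]
      rw [hsub, hWX, hDX]
      omega
  obtain ⟨E, hE⟩ := hEven
  have hE0 : 0 ≤ E := by have := hS0 (a + b); omega
  -- the coefficients
  refine ⟨fun i => if (i:ℕ) + 2 < a + b then (S ((i:ℕ) + 1)).toNat else E.toNat, ?_⟩
  have hcR : ∀ x : ℕ,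
      (((if x + 2 < a + b then (S (x + 1)).toNat else E.toNat : ℕ)) : ℝ)
      = (((if x + 2 < a + b then S (x + 1) else E : ℤ)) : ℝ) := by
    intro x
    split_ifs with h
    · exact_mod_cast congrArg (Int.cast : ℤ → ℝ) (Int.toNat_of_nonneg (hS0 (x + 1)))
    · exact_mod_cast congrArg (Int.cast : ℤ → ℝ) (Int.toNat_of_nonneg hE0)
  have hδfun : (fun k : Fin (a + b) =>
      if (∑ i : Fin (2 * a), α i) % 2 = (a : ℤ) % 2 then
        max (((a + b : ℕ) : ℝ) - 2 * a - 1 - ((k : ℕ) : ℝ)) 0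
      else if (k : ℕ) + a + 1 = b then 1
      else max (((a + b : ℕ) : ℝ) - 2 * a - 1 - ((k : ℕ) : ℝ)) 0)
      = fun k => ((D k : ℤ) : ℝ) := by
    funext k
    rw [hDeq k]
    split_ifs with h1 h2
    · push_cast
      ring_nf
    · norm_num
    · push_cast
      ring_nf
  rw [hδfun]
  funext k
  rw [Pi.sub_apply]
  beta_reduce
  rw [hwW k, sum_smul_simpleRootD hn3]
  have hkval := k.isLt
  have hSk1 : S ((k:ℕ) + 1) = S (k:ℕ) + U k := by
    have := hSsucc (k:ℕ) k.isLt
    rwa [Fin.eta k k.isLt] at this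
  have hUkWD : U k = W k - D k := hUeq k
  by_cases hA : (k:ℕ) + 1 = a + b
  · rw [if_neg (by omega), if_neg (show ¬((k:ℕ) + 2 = a + b) by omega), if_pos hA,
      dif_pos (show 1 ≤ (k:ℕ) by omega)]
    simp only [Fin.val_mk]
    simp only [hcR]
    rw [if_neg (show ¬((k:ℕ) - 1 + 2 < a + b) by omega),
      if_neg (show ¬(a + b - 1 + 2 < a + b) by omega)]
    have hUk : W k - D k = 0 := by
      rw [← hUkWD]; exact hUlast k (by omega)
    have hcast : ((W k : ℤ) : ℝ) - ((D k : ℤ) : ℝ) = 0 := by exact_mod_cast hUk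
    push_cast
    linarith [hcast]
  · by_cases hB : (k:ℕ) + 2 = a + b
    · rw [if_pos (by omega), if_pos hB, if_neg hA, dif_pos (show 1 ≤ (k:ℕ) by omega)]
      simp only [Fin.val_mk]
      simp only [hcR]
      rw [if_neg (show ¬((k:ℕ) + 2 < a + b) by omega),
        if_pos (show (k:ℕ) - 1 + 2 < a + b by omega),
        if_neg (show ¬(a + b - 1 + 2 < a + b) by omega)]
      have hSm : S ((k:ℕ) - 1 + 1) = S (k:ℕ) := congrArg S (by omega)
      rw [hSm]
      have h2 : S ((k:ℕ) + 2) = S ((k:ℕ) + 1) + U ⟨(k:ℕ) + 1, by omega⟩ := hSsucc _ (by omega)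
      have h3 : U ⟨(k:ℕ) + 1, by omega⟩ = 0 := hUlast _ (by simp only [Fin.val_mk]; omega)
      have h4 : S ((k:ℕ) + 2) = S (a + b) := congrArg S (by omega)
      have hint : W k - D k = E - S (k:ℕ) + (1 + 0) * E := by omega
      have hcast : ((W k : ℤ) : ℝ) - ((D k : ℤ) : ℝ)
          = ((E : ℤ) : ℝ) - ((S (k:ℕ) : ℤ) : ℝ) + (1 + 0) * ((E : ℤ) : ℝ) := by
        exact_mod_cast congrArg (fun z : ℤ => (z : ℝ)) hint
      push_cast at hcast ⊢
      linarith [hcast]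
    · rw [if_pos (by omega), if_neg hB, if_neg hA]
      by_cases hk0 : 1 ≤ (k:ℕ)
      · rw [dif_pos hk0]
        simp only [Fin.val_mk]
        simp only [hcR]
        rw [if_pos (show (k:ℕ) + 2 < a + b by omega),
          if_pos (show (k:ℕ) - 1 + 2 < a + b by omega)]
        have hSm : S ((k:ℕ) - 1 + 1) = S (k:ℕ) := congrArg S (by omega)
        rw [hSm]
        have hint : W k - D k = S ((k:ℕ) + 1) - S (k:ℕ) + (0 + 0) * E := by omega
        have hcast : ((W k : ℤ) : ℝ) - ((D k : ℤ) : ℝ)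
            = ((S ((k:ℕ) + 1) : ℤ) : ℝ) - ((S (k:ℕ) : ℤ) : ℝ) + (0 + 0) * ((E : ℤ) : ℝ) := by
          exact_mod_cast congrArg (fun z : ℤ => (z : ℝ)) hint
        push_cast at hcast ⊢
        linarith [hcast]
      · rw [dif_neg hk0]
        simp only [Fin.val_mk]
        simp only [hcR]
        rw [if_pos (show (k:ℕ) + 2 < a + b by omega)]
        have hk00 : (k:ℕ) = 0 := by omega
        have hS00 : S (k:ℕ) = 0 := by rw [congrArg S hk00, hSzero]
        have hint : W k - D k = S ((k:ℕ) + 1) - 0 + (0 + 0) * E := by omega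
        have hcast : ((W k : ℤ) : ℝ) - ((D k : ℤ) : ℝ)
            = ((S ((k:ℕ) + 1) : ℤ) : ℝ) - 0 + (0 + 0) * ((E : ℤ) : ℝ) := by
          exact_mod_cast congrArg (fun z : ℤ => (z : ℝ)) hint
        push_cast at hcast ⊢
        linarith [hcast]
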